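/- Let S be a countable type with a level function ℓ : S → ℕ, let 1 ≤ p < ∞, let L ∈ ℕ, and let K : S × S → ℂ be a kernel with each row {y : K(x,y) ≠ 0} finite and K(x,y) = 0 whenever |ℓ(x) − ℓ(y)| > L, inducing the operator (Tf)(x) = Σ_y K(x,y)·f(y). Suppose (a) there exists M > 0 such that ‖(|T|(|g|))_δ‖_p ≤ M·‖g_δ‖_p for every g : S → ℂ and every δ ∈ (0,1/2), where g_δ(x) = (1−δ)^{ℓ(x)}g(x) and |T| has kernel |K(x,y)|, and (b) T maps ℓ^p(S) boundedly into itself. If f : S → ℂ is nonzero, satisfies f_δ ∈ ℓ^p(S) for every δ ∈ (0,1), and Tf = λ·f pointwise for some λ ∈ ℂ, then λ lies in the approximate point spectrum of T acting on ℓ^p(S): for every ε > 0 there exists a nonzero g ∈ ℓ^p(S) with ‖Tg − λg‖_p ≤ ε·‖g‖_p. -/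

import Mathlib

lemma stmt13_aux_pow (t : ℝ) (ht0 : 0 < t) (ht1 : t ≤ 1) (L a b : ℕ)
    (h1 : (a:ℤ) ≤ b + L) (h2 : (b:ℤ) ≤ a + L) :
    |t ^ b - t ^ a| ≤ t ^ a * ((t ^ L)⁻¹ - 1) := by
  have hL : 0 < t ^ L := pow_pos ht0 L
  have hinv : (t ^ L) * (t ^ L)⁻¹ = 1 := mul_inv_cancel₀ hL.ne'
  rw [abs_sub_le_iff]
  constructor
  · have hb : t ^ b * t ^ L ≤ t ^ a := by
      rw [← pow_add]
      exact pow_le_pow_of_le_one ht0.le ht1 (by omega)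
    have hb2 : t ^ b ≤ t ^ a * (t ^ L)⁻¹ := by
      rw [← div_eq_mul_inv]; exact (le_div_iff₀ hL).2 hb
    nlinarith [hb2]
  · have ha : t ^ a * t ^ L ≤ t ^ b := by
      rw [← pow_add]
      exact pow_le_pow_of_le_one ht0.le ht1 (by omega)
    have hta : 0 ≤ t ^ a := (pow_pos ht0 a).le
    nlinarith [mul_nonneg (mul_nonneg hta (inv_nonneg.2 hL.le)) (sq_nonneg (1 - t ^ L))]

lemma stmt13_aux_sum {S : Type*} (p : ℝ) (hp : 1 ≤ p) {ι : Type*} (F : Finset ι)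
    (d : ι → S → ℝ) (hd : ∀ i x, 0 ≤ d i x)
    (h : ∀ i ∈ F, Summable fun x => d i x ^ p) :
    Summable fun x => (∑ i ∈ F, d i x) ^ p := by
  classical
  have hp0 : (0:ℝ) < p := lt_of_lt_of_le one_pos hp
  induction F using Finset.induction with
  | empty => simpa [Real.zero_rpow hp0.ne'] using summable_zero
  | @insert a F hnotmem ih =>
    have hsum : ∀ x, (0:ℝ) ≤ ∑ i ∈ F, d i x := fun x => Finset.sum_nonneg fun i _ => hd i x
    have ha : Summable fun x => d a x ^ p := h a (Finset.mem_insert_self a F)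
    have hF : Summable fun x => (∑ i ∈ F, d i x) ^ p :=
      ih fun i hi => h i (Finset.mem_insert_of_mem hi)
    have hdom : ∀ x, (∑ i ∈ insert a F, d i x) ^ p ≤
        2 ^ p * (d a x ^ p + (∑ i ∈ F, d i x) ^ p) := by
      intro x
      rw [Finset.sum_insert hnotmem]
      set u := d a x
      set v := ∑ i ∈ F, d i x
      have hu : 0 ≤ u := hd a x
      have hv : 0 ≤ v := hsum x
      have hle : u + v ≤ 2 * max u v := by
        rcases max_cases u v with ⟨hm, _⟩ | ⟨hm, _⟩ <;> rw [hm] <;> linarith [le_max_left u v, le_max_right u v]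
      calc (u + v) ^ p ≤ (2 * max u v) ^ p :=
            Real.rpow_le_rpow (by linarith) hle hp0.le
        _ = 2 ^ p * (max u v) ^ p := Real.mul_rpow (by norm_num) (le_max_of_le_left hu)
        _ ≤ 2 ^ p * (u ^ p + v ^ p) := by
            apply mul_le_mul_of_nonneg_left _ (Real.rpow_nonneg (by norm_num) p)
            rcases max_cases u v with ⟨hm, _⟩ | ⟨hm, _⟩ <;> rw [hm] <;>
              [nlinarith [Real.rpow_nonneg hv p]; nlinarith [Real.rpow_nonneg hu p]]
    exact Summable.of_nonneg_of_le
      (fun x => Real.rpow_nonneg (Finset.sum_nonneg fun i _ => hd i x) p)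
      hdom (((ha.add hF).mul_left _))

/-- A `p`-tempered eigenfunction of a row-finite bounded-propagation kernel
operator, bounded on the `δ`-weighted spaces and on `ℓ^p`, forces its eigenvalue
into the approximate point spectrum of the operator on `ℓ^p`. -/
theorem stmt13 {S : Type*} [Countable S] (ℓ : S → ℕ)
    (p : ℝ) (hp : 1 ≤ p) (L : ℕ) (K : S → S → ℂ)
    (hrow : ∀ x : S, {y : S | K x y ≠ 0}.Finite)
    (hprop : ∀ x y : S, (L : ℤ) < |(ℓ x : ℤ) - (ℓ y : ℤ)| → K x y = 0)
    (M : ℝ) (hM : 0 < M)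
    (hbound : ∀ (g : S → ℂ) (δ : ℝ), 0 < δ → δ < 1 / 2 →
      (∑' x : S, ((∑' y : S, ‖K x y‖ * ‖g y‖) * (1 - δ) ^ ℓ x) ^ p) ^ (1 / p) ≤
        M * (∑' x : S, (‖g x‖ * (1 - δ) ^ ℓ x) ^ p) ^ (1 / p))
    (B : ℝ)
    (hT : ∀ g : S → ℂ, (Summable fun x : S => ‖g x‖ ^ p) →
      (Summable fun x : S => ‖∑' y : S, K x y * g y‖ ^ p) ∧
        (∑' x : S, ‖∑' y : S, K x y * g y‖ ^ p) ^ (1 / p) ≤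
          B * (∑' x : S, ‖g x‖ ^ p) ^ (1 / p))
    (f : S → ℂ) (hf0 : f ≠ 0)
    (hftemp : ∀ δ : ℝ, 0 < δ → δ < 1 →
      Summable fun x : S => (‖f x‖ * (1 - δ) ^ ℓ x) ^ p)
    (lam : ℂ) (heig : ∀ x : S, ∑' y : S, K x y * f y = lam * f x) :
    ∀ ε : ℝ, 0 < ε → ∃ g : S → ℂ, g ≠ 0 ∧ (Summable fun x : S => ‖g x‖ ^ p) ∧
      (∑' x : S, ‖(∑' y : S, K x y * g y) - lam * g x‖ ^ p) ^ (1 / p) ≤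
        ε * (∑' x : S, ‖g x‖ ^ p) ^ (1 / p) := by
  classical
  intro ε hε
  have hp0 : (0:ℝ) < p := lt_of_lt_of_le one_pos hp
  have hpne : p ≠ 0 := hp0.ne'
  -- choice of δ
  set δ : ℝ := min (1/4) (ε / ((L+1) * (M + ε))) with hδdef
  have hden : (0:ℝ) < (L+1) * (M+ε) := by positivity
  have hδ0 : 0 < δ := lt_min (by norm_num) (div_pos hε hden)
  have hδ2 : δ < 1/2 := lt_of_le_of_lt (min_le_left _ _) (by norm_num)
  have hδ1 : δ < 1 := by linarith
  have ht0 : (0:ℝ) < 1 - δ := by linarith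
  have ht1 : (1:ℝ) - δ ≤ 1 := by linarith
  have htL : (0:ℝ) < (1 - δ) ^ L := pow_pos ht0 L
  set c : ℝ := ((1 - δ) ^ L)⁻¹ - 1 with hcdef
  have htL1 : (1 - δ) ^ L ≤ 1 := pow_le_one₀ ht0.le ht1
  have hc0 : 0 ≤ c := by
    have : (1:ℝ) ≤ ((1 - δ) ^ L)⁻¹ := (one_le_inv₀ htL).2 htL1
    simp only [hcdef]; linarith
  have hcM : c * M ≤ ε := by
    have hbern : 1 - (L:ℝ) * δ ≤ (1 - δ) ^ L := by
      have h := one_add_mul_le_pow (show (-2:ℝ) ≤ -δ by linarith) L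
      have e : (1:ℝ) + -δ = 1 - δ := by ring
      rw [e] at h
      linarith [h]
    have hδle : δ ≤ ε / ((L+1) * (M+ε)) := min_le_right _ _
    have hLδ : (L:ℝ) * δ ≤ ε / (M + ε) := by
      have h1 : (L:ℝ) * δ ≤ (L:ℝ) * (ε / ((L+1) * (M+ε))) :=
        mul_le_mul_of_nonneg_left hδle (Nat.cast_nonneg L)
      have h2 : (L:ℝ) * (ε / ((L+1) * (M+ε))) ≤ ε / (M + ε) := by
        rw [mul_div_assoc'] at *
        rw [div_le_div_iff₀ hden (by linarith)]
        nlinarith [mul_nonneg hε.le (show (0:ℝ) ≤ M + ε by linarith)]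
      linarith
    have hs : M / (M + ε) ≤ (1 - δ) ^ L := by
      have e : M / (M + ε) = 1 - ε / (M + ε) := by field_simp; ring
      rw [e]; linarith
    have hs0 : (0:ℝ) < M / (M + ε) := by positivity
    have hMi : M * ((1 - δ) ^ L)⁻¹ ≤ M + ε := by
      have h3 : M / ((1 - δ) ^ L) ≤ M / (M / (M + ε)) :=
        div_le_div_of_nonneg_left hM.le hs0 hs
      have h4 : M / (M / (M + ε)) = M + ε := by field_simp
      rw [h4] at h3
      rw [div_eq_mul_inv] at h3
      exact h3
    simp only [hcdef]; nlinarith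
  -- the candidate vector
  set g : S → ℂ := fun x => f x * ((1 - δ : ℝ) : ℂ) ^ ℓ x with hgdef
  have hgnorm : ∀ x, ‖g x‖ = ‖f x‖ * (1 - δ) ^ ℓ x := by
    intro x
    simp only [hgdef, norm_mul, norm_pow, Complex.norm_real, Real.norm_eq_abs,
      abs_of_pos ht0]
  have hSg : Summable fun x => ‖g x‖ ^ p := by
    exact (hftemp δ hδ0 hδ1).congr fun x => by rw [hgnorm x]
  have hgne : g ≠ 0 := by
    intro hg
    apply hf0
    funext x
    have hx : f x * ((1 - δ : ℝ) : ℂ) ^ ℓ x = 0 := by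
      have := congrFun hg x
      simpa [hgdef] using this
    have htne : (((1 - δ : ℝ)) : ℂ) ^ ℓ x ≠ 0 :=
      pow_ne_zero _ (by exact_mod_cast ht0.ne')
    have := (mul_eq_zero.1 hx).resolve_right htne
    simpa using this
  -- row sums are finite sums
  have hrowsum : ∀ (x : S) (u : S → ℂ),
      ∑' y, K x y * u y = ∑ y ∈ (hrow x).toFinset, K x y * u y := by
    intro x u
    refine tsum_eq_sum fun y hy => ?_
    have hK : K x y = 0 := by
      by_contra hne
      exact hy ((hrow x).mem_toFinset.2 hne)
    simp [hK]
  have hrowsumR : ∀ (x : S) (v : S → ℝ),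
      ∑' y, ‖K x y‖ * v y = ∑ y ∈ (hrow x).toFinset, ‖K x y‖ * v y := by
    intro x v
    refine tsum_eq_sum fun y hy => ?_
    have hK : K x y = 0 := by
      by_contra hne
      exact hy ((hrow x).mem_toFinset.2 hne)
    simp [hK]
  -- pointwise error bound
  have hh0 : ∀ x, (0:ℝ) ≤ (∑' y, ‖K x y‖ * ‖f y‖) * (1 - δ) ^ ℓ x := by
    intro x
    exact mul_nonneg (tsum_nonneg fun y => mul_nonneg (norm_nonneg _) (norm_nonneg _))
      (pow_pos ht0 _).le
  have herr : ∀ x, ‖(∑' y, K x y * g y) - lam * g x‖ ≤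
      c * ((∑' y, ‖K x y‖ * ‖f y‖) * (1 - δ) ^ ℓ x) := by
    intro x
    have e2 : lam * g x
        = ∑ y ∈ (hrow x).toFinset, K x y * f y * ((1 - δ : ℝ) : ℂ) ^ ℓ x := by
      have : lam * g x = (∑' y, K x y * f y) * ((1 - δ : ℝ) : ℂ) ^ ℓ x := by
        rw [heig x, hgdef]; ring
      rw [this, hrowsum x f, Finset.sum_mul]
    have e1 : (∑' y, K x y * g y) - lam * g x
        = ∑ y ∈ (hrow x).toFinset,
            K x y * f y * (((1 - δ : ℝ) : ℂ) ^ ℓ y - ((1 - δ : ℝ) : ℂ) ^ ℓ x) := by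
      rw [hrowsum x g, e2, ← Finset.sum_sub_distrib]
      refine Finset.sum_congr rfl fun y _ => ?_
      simp only [hgdef]; ring
    rw [e1]
    calc ‖∑ y ∈ (hrow x).toFinset,
            K x y * f y * (((1 - δ : ℝ) : ℂ) ^ ℓ y - ((1 - δ : ℝ) : ℂ) ^ ℓ x)‖
        ≤ ∑ y ∈ (hrow x).toFinset,
            ‖K x y * f y * (((1 - δ : ℝ) : ℂ) ^ ℓ y - ((1 - δ : ℝ) : ℂ) ^ ℓ x)‖ :=
          norm_sum_le _ _
      _ ≤ ∑ y ∈ (hrow x).toFinset, ‖K x y‖ * ‖f y‖ * ((1 - δ) ^ ℓ x * c) := by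
          refine Finset.sum_le_sum fun y hy => ?_
          have hK : K x y ≠ 0 := (hrow x).mem_toFinset.1 hy
          have habs : |(ℓ x : ℤ) - (ℓ y : ℤ)| ≤ L := by
            by_contra hgt
            exact hK (hprop x y (lt_of_not_ge hgt))
          have h1 : ((ℓ x : ℕ) : ℤ) ≤ (ℓ y : ℕ) + L := by
            rcases abs_le.1 habs with ⟨hl, hr⟩; omega
          have h2 : ((ℓ y : ℕ) : ℤ) ≤ (ℓ x : ℕ) + L := by
            rcases abs_le.1 habs with ⟨hl, hr⟩; omega
          have hnorm : ‖(((1 - δ : ℝ) : ℂ) ^ ℓ y - ((1 - δ : ℝ) : ℂ) ^ ℓ x)‖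
              = |(1 - δ) ^ ℓ y - (1 - δ) ^ ℓ x| := by
            rw [← Complex.ofReal_pow, ← Complex.ofReal_pow, ← Complex.ofReal_sub,
              Complex.norm_real, Real.norm_eq_abs]
          rw [norm_mul, norm_mul, hnorm]
          have hb := stmt13_aux_pow (1 - δ) ht0 ht1 L (ℓ x) (ℓ y) h1 h2
          have : |(1 - δ) ^ ℓ y - (1 - δ) ^ ℓ x| ≤ (1 - δ) ^ ℓ x * c := by
            simpa [hcdef] using hb
          exact mul_le_mul_of_nonneg_left this
            (mul_nonneg (norm_nonneg _) (norm_nonneg _))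
      _ = (∑ y ∈ (hrow x).toFinset, ‖K x y‖ * ‖f y‖) * ((1 - δ) ^ ℓ x * c) :=
          (Finset.sum_mul _ _ _).symm
      _ = c * ((∑' y, ‖K x y‖ * ‖f y‖) * (1 - δ) ^ ℓ x) := by
          rw [hrowsumR x (fun y => ‖f y‖)]; ring
  -- columns of K are in ℓ^p
  have hcol : ∀ y0 : S, Summable fun x => ‖K x y0‖ ^ p := by
    intro y0
    have hind : Summable fun y : S => ‖(fun y => if y = y0 then (1:ℂ) else 0) y‖ ^ p := by
      apply summable_of_ne_finset_zero (s := {y0})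
      intro y hy
      simp only [Finset.mem_singleton] at hy
      simp [hy, Real.zero_rpow hpne]
    refine ((hT _ hind).1).congr fun x => ?_
    have e : (∑' y, K x y * (if y = y0 then (1:ℂ) else 0))
        = K x y0 * (if y0 = y0 then (1:ℂ) else 0) :=
      tsum_eq_single y0 (fun y hy => by simp [hy])
    rw [e]; simp
  -- basic facts about the reference sum B0
  have hfds : Summable fun x => (‖f x‖ * (1 - δ) ^ ℓ x) ^ p := hftemp δ hδ0 hδ1
  set B0 : ℝ := ∑' x, (‖f x‖ * (1 - δ) ^ ℓ x) ^ p with hB0def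
  have hB0 : 0 ≤ B0 :=
    tsum_nonneg fun x => Real.rpow_nonneg (mul_nonneg (norm_nonneg _) (pow_pos ht0 _).le) p
  have hw1 : ∀ x, (1 - δ:ℝ) ^ ℓ x ≤ 1 := fun x => pow_le_one₀ ht0.le ht1
  -- key finite-sum bound
  have hkey : ∀ u : Finset S,
      ∑ x ∈ u, ((∑' y, ‖K x y‖ * ‖f y‖) * (1 - δ) ^ ℓ x) ^ p ≤ M ^ p * B0 := by
    intro u
    set F : Finset S := u.biUnion (fun x => (hrow x).toFinset) with hFdef
    set fF : S → ℂ := fun y => if y ∈ F then f y else 0 with hfFdef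
    have hFx : ∀ x : S, (∑' y, ‖K x y‖ * ‖fF y‖) = ∑ y ∈ F, ‖K x y‖ * ‖f y‖ := by
      intro x
      rw [tsum_eq_sum (s := F) (fun y hy => by simp [hfFdef, hy])]
      exact Finset.sum_congr rfl fun y hy => by simp [hfFdef, hy]
    have hFsummand : Summable fun x => ((∑' y, ‖K x y‖ * ‖fF y‖) * (1 - δ) ^ ℓ x) ^ p := by
      have hsum2 : Summable fun x => (∑ y0 ∈ F, ‖K x y0‖ * ‖f y0‖ * (1 - δ) ^ ℓ x) ^ p := by
        apply stmt13_aux_sum p hp F (fun y0 x => ‖K x y0‖ * ‖f y0‖ * (1 - δ) ^ ℓ x)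
          (fun i x => by positivity)
        intro y0 _
        apply Summable.of_nonneg_of_le (fun x => Real.rpow_nonneg (by positivity) p)
          (fun x => ?_) (((hcol y0).mul_left (‖f y0‖ ^ p)))
        rw [Real.mul_rpow (by positivity) (pow_pos ht0 _).le,
          Real.mul_rpow (norm_nonneg _) (norm_nonneg _)]
        have h1 : ((1 - δ) ^ ℓ x) ^ p ≤ 1 :=
          Real.rpow_le_one (pow_pos ht0 _).le (hw1 x) hp0.le
        have h2 : (0:ℝ) ≤ ‖K x y0‖ ^ p * ‖f y0‖ ^ p := by positivity
        nlinarith [h1, h2]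
      refine hsum2.congr fun x => ?_
      rw [hFx x, Finset.sum_mul]
    have hRFs : Summable fun x => (‖fF x‖ * (1 - δ) ^ ℓ x) ^ p := by
      apply Summable.of_nonneg_of_le (fun x => Real.rpow_nonneg (by positivity) p)
        (fun x => ?_) hfds
      apply Real.rpow_le_rpow (by positivity) _ hp0.le
      apply mul_le_mul_of_nonneg_right _ (pow_pos ht0 _).le
      by_cases hxF : x ∈ F <;> simp [hfFdef, hxF]
    have hRF : (∑' x, (‖fF x‖ * (1 - δ) ^ ℓ x) ^ p) ≤ B0 := by
      apply Summable.tsum_le_tsum _ hRFs hfds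
      intro x
      apply Real.rpow_le_rpow (by positivity) _ hp0.le
      apply mul_le_mul_of_nonneg_right _ (pow_pos ht0 _).le
      by_cases hxF : x ∈ F <;> simp [hfFdef, hxF]
    set A : ℝ := ∑' x, ((∑' y, ‖K x y‖ * ‖fF y‖) * (1 - δ) ^ ℓ x) ^ p with hAdef
    have hA0 : 0 ≤ A := tsum_nonneg fun x => Real.rpow_nonneg
      (mul_nonneg (tsum_nonneg fun y => mul_nonneg (norm_nonneg _) (norm_nonneg _))
        (pow_pos ht0 _).le) p
    have h5 : A ^ (1/p) ≤ M * B0 ^ (1/p) := by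
      refine (hbound fF δ hδ0 hδ2).trans ?_
      exact mul_le_mul_of_nonneg_left
        (Real.rpow_le_rpow (tsum_nonneg fun x => Real.rpow_nonneg (by positivity) p)
          hRF (by positivity)) hM.le
    have hAle : A ≤ M ^ p * B0 := by
      have e1 : A = (A ^ (1/p)) ^ p := by
        rw [← Real.rpow_mul hA0, one_div, inv_mul_cancel₀ hpne, Real.rpow_one]
      rw [e1]
      calc (A ^ (1/p)) ^ p ≤ (M * B0 ^ (1/p)) ^ p :=
            Real.rpow_le_rpow (Real.rpow_nonneg hA0 _) h5 hp0.le
        _ = M ^ p * B0 := by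
            rw [Real.mul_rpow hM.le (Real.rpow_nonneg hB0 _), ← Real.rpow_mul hB0,
              one_div, inv_mul_cancel₀ hpne, Real.rpow_one]
    have hxu : ∀ x ∈ u, (∑' y, ‖K x y‖ * ‖f y‖) = ∑' y, ‖K x y‖ * ‖fF y‖ := by
      intro x hx
      apply tsum_congr; intro y
      by_cases hK : K x y = 0
      · simp [hK]
      · have hyF : y ∈ F := Finset.mem_biUnion.2 ⟨x, hx, (hrow x).mem_toFinset.2 hK⟩
        simp [hfFdef, hyF]
    calc ∑ x ∈ u, ((∑' y, ‖K x y‖ * ‖f y‖) * (1 - δ) ^ ℓ x) ^ p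
        = ∑ x ∈ u, ((∑' y, ‖K x y‖ * ‖fF y‖) * (1 - δ) ^ ℓ x) ^ p :=
          Finset.sum_congr rfl fun x hx => by rw [hxu x hx]
      _ ≤ A := Summable.sum_le_tsum u (fun x _ => Real.rpow_nonneg
          (mul_nonneg (tsum_nonneg fun y => mul_nonneg (norm_nonneg _) (norm_nonneg _))
            (pow_pos ht0 _).le) p) hFsummand
      _ ≤ M ^ p * B0 := hAle
  -- assemble
  have hhs : Summable fun x => ((∑' y, ‖K x y‖ * ‖f y‖) * (1 - δ) ^ ℓ x) ^ p :=
    summable_of_sum_le (fun x => Real.rpow_nonneg (hh0 x) p) hkey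
  have hts : ∑' x, ((∑' y, ‖K x y‖ * ‖f y‖) * (1 - δ) ^ ℓ x) ^ p ≤ M ^ p * B0 :=
    Summable.tsum_le_of_sum_le hhs hkey
  have hcs : Summable fun x => (c * ((∑' y, ‖K x y‖ * ‖f y‖) * (1 - δ) ^ ℓ x)) ^ p := by
    refine ((hhs.mul_left (c ^ p)).congr fun x => ?_)
    rw [Real.mul_rpow hc0 (hh0 x)]
  have heSumm : Summable fun x => ‖(∑' y, K x y * g y) - lam * g x‖ ^ p :=
    Summable.of_nonneg_of_le (fun x => Real.rpow_nonneg (norm_nonneg _) p)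
      (fun x => Real.rpow_le_rpow (norm_nonneg _) (herr x) hp0.le) hcs
  refine ⟨g, hgne, hSg, ?_⟩
  have hgB0 : ∑' x, ‖g x‖ ^ p = B0 := tsum_congr fun x => by rw [hgnorm x]
  rw [hgB0]
  have hets : ∑' x, ‖(∑' y, K x y * g y) - lam * g x‖ ^ p ≤ c ^ p * (M ^ p * B0) := by
    calc ∑' x, ‖(∑' y, K x y * g y) - lam * g x‖ ^ p
        ≤ ∑' x, (c * ((∑' y, ‖K x y‖ * ‖f y‖) * (1 - δ) ^ ℓ x)) ^ p :=
          Summable.tsum_le_tsum (fun x => Real.rpow_le_rpow (norm_nonneg _) (herr x) hp0.le)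
            heSumm hcs
      _ = c ^ p * ∑' x, ((∑' y, ‖K x y‖ * ‖f y‖) * (1 - δ) ^ ℓ x) ^ p := by
          rw [tsum_congr (fun x => Real.mul_rpow hc0 (hh0 x)), tsum_mul_left]
      _ ≤ c ^ p * (M ^ p * B0) :=
          mul_le_mul_of_nonneg_left hts (Real.rpow_nonneg hc0 p)
  calc (∑' x, ‖(∑' y, K x y * g y) - lam * g x‖ ^ p) ^ (1/p)
      ≤ (c ^ p * (M ^ p * B0)) ^ (1/p) :=
        Real.rpow_le_rpow (tsum_nonneg fun x => Real.rpow_nonneg (norm_nonneg _) p)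
          hets (by positivity)
    _ = (c * M) * B0 ^ (1/p) := by
        rw [show c ^ p * (M ^ p * B0) = (c * M) ^ p * B0 by
              rw [Real.mul_rpow hc0 hM.le]; ring,
          Real.mul_rpow (Real.rpow_nonneg (mul_nonneg hc0 hM.le) p) hB0,
          ← Real.rpow_mul (mul_nonneg hc0 hM.le), mul_one_div, div_self hpne,
          Real.rpow_one]
    _ ≤ ε * B0 ^ (1/p) := mul_le_mul_of_nonneg_right hcM (Real.rpow_nonneg hB0 _)
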